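/- For σ > 0, S₁₁ > 0, |j| ≤ 1, and ω > 0, the function C(t) = S₁₁ e^{−σ|t|}(cos(ωt) + (σ j/ω) sin(ω|t|)) has Fourier transform Ĉ(ν) = ∫ℝ C(t) e^{−iνt} dt which is real and nonnegative for all ν ∈ ℝ. -/

import Mathlib

open MeasureTheory Set Complex Filter

lemma intOn_cexp {z : ℂ} (hz : z.re < 0) :
    IntegrableOn (fun t : ℝ ↦ Complex.exp (z * t)) (Ioi (0:ℝ)) := by
  have hb : 0 < -z.re := by linarith
  apply Integrable.mono' (g := fun t : ℝ ↦ Real.exp (-(-z.re) * t)) (exp_neg_integrableOn_Ioi 0 hb)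
  · exact (Complex.continuous_exp.comp (by continuity)).aestronglyMeasurable
  · filter_upwards with t
    rw [Complex.norm_exp]
    simp [Complex.mul_re]

lemma integral_cexp_Ioi {z : ℂ} (hz : z.re < 0) :
    ∫ t : ℝ in Ioi (0:ℝ), Complex.exp (z * t) = -z⁻¹ := by
  have hz0 : z ≠ 0 := fun h => by simp [h] at hz
  have := integral_Ioi_of_hasDerivAt_of_tendsto' (f := fun t : ℝ ↦ Complex.exp (z * t) / z)
    (f' := fun t : ℝ ↦ Complex.exp (z * t)) (a := 0) (m := 0)
    (fun x _ => ?_) (intOn_cexp hz) ?_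
  · simpa using this
  · have h1 : HasDerivAt (fun t : ℝ ↦ Complex.exp (z * t)) (Complex.exp (z * x) * z) x := by
      have := ((Complex.hasDerivAt_exp (z * x)).comp (x:ℂ)
        ((hasDerivAt_id (x:ℂ)).const_mul z)).comp_ofReal
      simpa [mul_comm] using this
    simpa [mul_div_cancel_right₀ _ hz0] using h1.div_const z
  · rw [tendsto_zero_iff_norm_tendsto_zero]
    have heq : (fun t : ℝ ↦ ‖Complex.exp (z * t) / z‖) = fun t : ℝ ↦ Real.exp (z.re * t) / ‖z‖ := by
      funext t
      rw [norm_div, Complex.norm_exp]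
      simp [Complex.mul_re]
    rw [heq]
    simpa using (Real.tendsto_exp_atBot.comp
      ((tendsto_const_mul_atBot_of_neg hz).2 tendsto_id)).div_const ‖z‖

lemma intOn_Iic_of_neg {f : ℝ → ℂ} (hm : AEStronglyMeasurable f volume)
    (h : IntegrableOn (fun x ↦ f (-x)) (Ioi (0:ℝ))) : IntegrableOn f (Iic (0:ℝ)) := by
  have m : MeasurableEmbedding fun x : ℝ => -x := (Homeomorph.neg ℝ).measurableEmbedding
  have h2 : IntegrableOn f (Iic (0:ℝ)) (Measure.map (fun x : ℝ => -x) volume) := by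
    rw [m.integrableOn_map_iff]
    simp only [Function.comp_def, neg_preimage, neg_Iic, neg_zero]
    exact Iff.mpr integrableOn_Ici_iff_integrableOn_Ioi h
  rwa [show Measure.map (fun x : ℝ => -x) volume = volume from
    Measure.map_neg_eq_self (volume : Measure ℝ)] at h2

theorem stmt_14 (σ S₁₁ j ω : ℝ) (hσ : 0 < σ) (hS : 0 < S₁₁) (hj : |j| ≤ 1) (hω : 0 < ω)
    (C : ℝ → ℝ)
    (hC : ∀ t : ℝ, C t =
      S₁₁ * Real.exp (-σ * |t|) * (Real.cos (ω * t) + (σ * j / ω) * Real.sin (ω * |t|))) :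
    ∀ ν : ℝ,
      (∫ t : ℝ, (C t : ℂ) * Complex.exp (-Complex.I * (ν : ℂ) * (t : ℂ))).im = 0 ∧
      0 ≤ (∫ t : ℝ, (C t : ℂ) * Complex.exp (-Complex.I * (ν : ℂ) * (t : ℂ))).re := by
  intro ν
  set k : ℝ := σ * j / ω with hk
  obtain ⟨c₁, hc₁⟩ : ∃ c : ℂ, c = (S₁₁ : ℂ) / 2 * (1 - (k : ℂ) * I) := ⟨_, rfl⟩
  obtain ⟨c₂, hc₂⟩ : ∃ c : ℂ, c = (S₁₁ : ℂ) / 2 * (1 + (k : ℂ) * I) := ⟨_, rfl⟩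
  have hz₁re : ∀ μ : ℝ, ((-(σ:ℂ) + ((ω:ℂ) - μ) * I)).re = -σ := by intro μ; simp
  have hz₂re : ∀ μ : ℝ, ((-(σ:ℂ) - ((ω:ℂ) + μ) * I)).re = -σ := by intro μ; simp
  have hneg : ∀ μ : ℝ, (-(σ:ℂ) + ((ω:ℂ) - μ) * I).re < 0 := fun μ => by rw [hz₁re]; linarith
  have hneg' : ∀ μ : ℝ, (-(σ:ℂ) - ((ω:ℂ) + μ) * I).re < 0 := fun μ => by rw [hz₂re]; linarith
  -- pointwise decomposition on t ≥ 0
  have key : ∀ (μ t : ℝ), 0 ≤ t →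
      (C t : ℂ) * Complex.exp (-I * (μ:ℂ) * (t:ℂ)) =
        c₁ * Complex.exp ((-(σ:ℂ) + ((ω:ℂ) - μ) * I) * t) +
        c₂ * Complex.exp ((-(σ:ℂ) - ((ω:ℂ) + μ) * I) * t) := by
    intro μ t ht
    rw [hC t, _root_.abs_of_nonneg ht]
    have e0 : (-I * (μ:ℂ) * (t:ℂ)) = -(((μ * t : ℝ) : ℂ) * I) := by push_cast; ring
    have e1 : ((-(σ:ℂ) + ((ω:ℂ) - μ) * I) * t) =
        ((-σ * t : ℝ) : ℂ) + (((ω * t : ℝ) : ℂ) * I + -(((μ * t : ℝ) : ℂ) * I)) := by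
      push_cast; ring
    have e2 : ((-(σ:ℂ) - ((ω:ℂ) + μ) * I) * t) =
        ((-σ * t : ℝ) : ℂ) + (-(((ω * t : ℝ) : ℂ) * I) + -(((μ * t : ℝ) : ℂ) * I)) := by
      push_cast; ring
    rw [e0, e1, e2]
    rw [Complex.ofReal_mul, Complex.ofReal_mul, Complex.ofReal_add, Complex.ofReal_mul,
      Complex.ofReal_exp, Complex.ofReal_cos, Complex.ofReal_sin]
    rw [Complex.cos, Complex.sin]
    simp only [Complex.exp_add, neg_mul]
    rw [hc₁, hc₂]
    push_cast
    ring
  -- integral over Ioi 0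
  have Fcalc : ∀ μ : ℝ,
      ∫ t : ℝ in Ioi (0:ℝ), (C t : ℂ) * Complex.exp (-I * (μ:ℂ) * (t:ℂ)) =
        c₁ * -(-(σ:ℂ) + ((ω:ℂ) - μ) * I)⁻¹ + c₂ * -(-(σ:ℂ) - ((ω:ℂ) + μ) * I)⁻¹ := by
    intro μ
    rw [setIntegral_congr_fun measurableSet_Ioi (fun t ht => key μ t (le_of_lt ht))]
    rw [integral_add (((intOn_cexp (hneg μ)).const_mul c₁)) (((intOn_cexp (hneg' μ)).const_mul c₂)),
      integral_const_mul, integral_const_mul, integral_cexp_Ioi (hneg μ),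
      integral_cexp_Ioi (hneg' μ)]
  have hmeas : AEStronglyMeasurable (fun t : ℝ ↦ (C t : ℂ) * Complex.exp (-I * (ν:ℂ) * (t:ℂ))) volume := by
    apply Continuous.aestronglyMeasurable
    have hCc : Continuous C := by
      have : C = fun t => S₁₁ * Real.exp (-σ * |t|) * (Real.cos (ω * t) + k * Real.sin (ω * |t|)) :=
        funext hC
      rw [this]
      exact (continuous_const.mul (Real.continuous_exp.comp
        (continuous_const.mul _root_.continuous_abs))).mul
        ((Real.continuous_cos.comp (continuous_const.mul continuous_id)).add
        (continuous_const.mul (Real.continuous_sin.comp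
          (continuous_const.mul _root_.continuous_abs))))
    exact (Complex.continuous_ofReal.comp hCc).mul (Complex.continuous_exp.comp
      ((continuous_const.mul Complex.continuous_ofReal) :
        Continuous fun t : ℝ => -I * (ν:ℂ) * (t:ℂ)))
  have hCeven : ∀ t : ℝ, C (-t) = C t := by
    intro t; rw [hC, hC]; simp [abs_neg, mul_neg, Real.cos_neg]
  have hfneg : ∀ x : ℝ, (C (-x) : ℂ) * Complex.exp (-I * (ν:ℂ) * ((-x : ℝ):ℂ)) =
      (C x : ℂ) * Complex.exp (-I * ((-ν : ℝ):ℂ) * (x:ℂ)) := by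
    intro x
    rw [hCeven x, show (-I * (ν:ℂ) * ((-x : ℝ):ℂ)) = (-I * ((-ν : ℝ):ℂ) * (x:ℂ)) by push_cast; ring]
  have hIoi : IntegrableOn (fun t : ℝ ↦ (C t : ℂ) * Complex.exp (-I * (ν:ℂ) * (t:ℂ))) (Ioi 0) :=
    MeasureTheory.IntegrableOn.congr_fun
      (((intOn_cexp (hneg ν)).const_mul c₁).add ((intOn_cexp (hneg' ν)).const_mul c₂))
      (fun t ht => (key ν t (le_of_lt ht)).symm) measurableSet_Ioi
  have hIic : IntegrableOn (fun t : ℝ ↦ (C t : ℂ) * Complex.exp (-I * (ν:ℂ) * (t:ℂ))) (Iic 0) := by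
    apply intOn_Iic_of_neg hmeas
    apply MeasureTheory.IntegrableOn.congr_fun
      (((intOn_cexp (hneg (-ν))).const_mul c₁).add ((intOn_cexp (hneg' (-ν))).const_mul c₂))
      (fun t ht => ?_) measurableSet_Ioi
    show c₁ * _ + c₂ * _ = _
    rw [hfneg t]
    exact (key (-ν) t (le_of_lt ht)).symm
  have hIic_val : ∫ t : ℝ in Iic (0:ℝ), (C t : ℂ) * Complex.exp (-I * (ν:ℂ) * (t:ℂ)) =
      c₁ * -(-(σ:ℂ) + ((ω:ℂ) - ((-ν : ℝ):ℂ)) * I)⁻¹ +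
      c₂ * -(-(σ:ℂ) - ((ω:ℂ) + ((-ν : ℝ):ℂ)) * I)⁻¹ := by
    have h0 := integral_comp_neg_Ioi (E := ℂ) 0
      (fun t => (C t : ℂ) * Complex.exp (-I * (ν:ℂ) * (t:ℂ)))
    rw [neg_zero] at h0
    rw [← h0]
    rw [setIntegral_congr_fun measurableSet_Ioi (fun t _ => hfneg t)]
    exact Fcalc (-ν)
  have hTot : (∫ t : ℝ, (C t : ℂ) * Complex.exp (-I * (ν:ℂ) * (t:ℂ))) =
      (c₁ * -(-(σ:ℂ) + ((ω:ℂ) - ((-ν : ℝ):ℂ)) * I)⁻¹ +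
       c₂ * -(-(σ:ℂ) - ((ω:ℂ) + ((-ν : ℝ):ℂ)) * I)⁻¹) +
      (c₁ * -(-(σ:ℂ) + ((ω:ℂ) - (ν:ℂ)) * I)⁻¹ +
       c₂ * -(-(σ:ℂ) - ((ω:ℂ) + (ν:ℂ)) * I)⁻¹) := by
    rw [← intervalIntegral.integral_Iic_add_Ioi hIic hIoi, hIic_val, Fcalc ν]
  obtain ⟨w, hw⟩ : ∃ c : ℂ, c = c₁ * -(-(σ:ℂ) + ((ω:ℂ) - ((-ν : ℝ):ℂ)) * I)⁻¹ +
      c₁ * -(-(σ:ℂ) + ((ω:ℂ) - (ν:ℂ)) * I)⁻¹ := ⟨_, rfl⟩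
  have hcc : (starRingEnd ℂ) c₁ = c₂ := by
    rw [hc₁, hc₂]
    simp only [map_mul, map_div₀, map_sub, map_one, map_ofNat, Complex.conj_I,
      Complex.conj_ofReal]
    ring
  have hz1c : (starRingEnd ℂ) (-(σ:ℂ) + ((ω:ℂ) - ((-ν : ℝ):ℂ)) * I) =
      -(σ:ℂ) - ((ω:ℂ) + (ν:ℂ)) * I := by
    simp only [map_add, map_neg, map_mul, map_sub, Complex.conj_I, Complex.conj_ofReal,
      Complex.ofReal_neg]
    ring
  have hz2c : (starRingEnd ℂ) (-(σ:ℂ) + ((ω:ℂ) - (ν:ℂ)) * I) =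
      -(σ:ℂ) - ((ω:ℂ) + ((-ν : ℝ):ℂ)) * I := by
    simp only [map_add, map_neg, map_mul, map_sub, Complex.conj_I, Complex.conj_ofReal,
      Complex.ofReal_neg]
    ring
  have hconjw : (starRingEnd ℂ) w = c₂ * -(-(σ:ℂ) - ((ω:ℂ) + (ν:ℂ)) * I)⁻¹ +
      c₂ * -(-(σ:ℂ) - ((ω:ℂ) + ((-ν : ℝ):ℂ)) * I)⁻¹ := by
    rw [hw, map_add, map_mul, map_mul, map_neg, map_neg, map_inv₀, map_inv₀, hcc, hz1c, hz2c]
  have hsum : c₁ * -(-(σ:ℂ) + ((ω:ℂ) - ((-ν : ℝ):ℂ)) * I)⁻¹ +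
      c₂ * -(-(σ:ℂ) - ((ω:ℂ) + ((-ν : ℝ):ℂ)) * I)⁻¹ +
      (c₁ * -(-(σ:ℂ) + ((ω:ℂ) - (ν:ℂ)) * I)⁻¹ +
       c₂ * -(-(σ:ℂ) - ((ω:ℂ) + (ν:ℂ)) * I)⁻¹) = w + (starRingEnd ℂ) w := by
    rw [hconjw, hw]
    ring
  have hinv : ∀ μ : ℝ, -(-(σ:ℂ) + ((ω:ℂ) - (μ:ℂ)) * I)⁻¹ =
      (((σ / (σ^2 + (ω-μ)^2) : ℝ)) : ℂ) + (((ω-μ) / (σ^2 + (ω-μ)^2) : ℝ) : ℂ) * I := by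
    intro μ
    have hd : (0:ℝ) < σ^2 + (ω-μ)^2 := by positivity
    have hmul : (-(σ:ℂ) + ((ω:ℂ) - (μ:ℂ)) * I) *
        (-((((σ / (σ^2 + (ω-μ)^2) : ℝ)) : ℂ) + (((ω-μ) / (σ^2 + (ω-μ)^2) : ℝ) : ℂ) * I)) = 1 := by
      apply Complex.ext
      · simp only [Complex.mul_re, Complex.neg_re, Complex.neg_im, Complex.add_re, Complex.add_im,
          Complex.mul_im, Complex.sub_re, Complex.sub_im, Complex.one_re, Complex.I_re,
          Complex.I_im, Complex.ofReal_re, Complex.ofReal_im]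
        field_simp
        ring
      · simp only [Complex.mul_re, Complex.neg_re, Complex.neg_im, Complex.add_re, Complex.add_im,
          Complex.mul_im, Complex.sub_re, Complex.sub_im, Complex.one_im, Complex.I_re,
          Complex.I_im, Complex.ofReal_re, Complex.ofReal_im]
        field_simp
        ring
    have := inv_eq_of_mul_eq_one_right hmul
    rw [this]
    ring
  have hwre : w.re = (S₁₁/2*σ + S₁₁/2*k*(ω+ν)) / (σ^2 + (ω+ν)^2) +
      (S₁₁/2*σ + S₁₁/2*k*(ω-ν)) / (σ^2 + (ω-ν)^2) := by
    have hA : (0:ℝ) < σ^2 + (ω+ν)^2 := by positivity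
    have hB : (0:ℝ) < σ^2 + (ω-ν)^2 := by positivity
    have hA' : (0:ℝ) < σ^2 + (ω - -ν)^2 := by
      have : ω - -ν = ω + ν := by ring
      rw [this]; exact hA
    rw [hw, hinv (-ν), hinv ν, hc₁]
    simp only [Complex.add_re, Complex.mul_re, Complex.mul_im, Complex.sub_re, Complex.sub_im,
      Complex.one_re, Complex.one_im, Complex.I_re, Complex.I_im, Complex.ofReal_re,
      Complex.ofReal_im, Complex.div_re, Complex.div_im, Complex.re_ofNat, Complex.im_ofNat,
      Complex.add_im, Complex.ofReal_neg, Complex.normSq_ofNat]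
    field_simp
    ring
  rw [hTot, hsum]
  constructor
  · simp [Complex.add_im, Complex.conj_im]
  · rw [Complex.add_conj]
    simp only [Complex.ofReal_re]
    rw [hwre]
    have hA : (0:ℝ) < σ^2 + (ω+ν)^2 := by positivity
    have hB : (0:ℝ) < σ^2 + (ω-ν)^2 := by positivity
    have hk1 : k * ω ≤ σ := by
      rw [hk]
      have : σ * j / ω * ω = σ * j := by field_simp
      rw [this]
      nlinarith [(abs_le.mp hj).2]
    have hk2 : -σ ≤ k * ω := by
      rw [hk]
      have : σ * j / ω * ω = σ * j := by field_simp
      rw [this]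
      nlinarith [(abs_le.mp hj).1]
    rw [div_add_div _ _ (ne_of_gt hA) (ne_of_gt hB)]
    have hnn : (0:ℝ) ≤ ((S₁₁/2*σ + S₁₁/2*k*(ω+ν)) * (σ^2 + (ω-ν)^2) +
        (σ^2 + (ω+ν)^2) * (S₁₁/2*σ + S₁₁/2*k*(ω-ν))) := by
      nlinarith [mul_nonneg (mul_nonneg hS.le (by linarith : (0:ℝ) ≤ σ + k*ω))
          (by positivity : (0:ℝ) ≤ σ^2 + ω^2),
        mul_nonneg (mul_nonneg hS.le (by linarith : (0:ℝ) ≤ σ - k*ω)) (sq_nonneg ν)]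
    have := div_nonneg hnn (le_of_lt (mul_pos hA hB))
    linarith
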